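/- Suppose all client weights are natural numbers. In any client equilibrium σ with k facilities, every facility load is a rational number of the form x/y with x, y natural numbers, x at most the total weight of all clients, and 1 ≤ y ≤ k. -/
import Mathlib


open Finset

/-- Load of facility `j` under weight distribution `σ`. -/
def load {n k : ℕ} (σ : Fin n → Fin k → ℝ) (j : Fin k) : ℝ := ∑ i, σ i j

/-- A feasible client weight distribution: nonnegative, supported on accessible
facilities, and clients with a nonempty accessible set distribute their full weight. -/
def Feasible {n k : ℕ} (w : Fin n → ℝ) (N : Fin n → Finset (Fin k))
    (σ : Fin n → Fin k → ℝ) : Prop :=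
  (∀ i j, 0 ≤ σ i j) ∧
  (∀ i j, j ∉ N i → σ i j = 0) ∧
  (∀ i, (N i).Nonempty → ∑ j ∈ N i, σ i j = w i)

/-- Client equilibrium: no client puts positive weight on a facility while a
strictly less loaded accessible facility exists. -/
def ClientEq {n k : ℕ} (w : Fin n → ℝ) (N : Fin n → Finset (Fin k))
    (σ : Fin n → Fin k → ℝ) : Prop :=
  Feasible w N σ ∧
  ∀ i : Fin n, ∀ j ∈ N i, ∀ j' ∈ N i, 0 < σ i j → load σ j ≤ load σ j'

/-- With natural-number client weights, every equilibrium facility load has the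
form `x / y` with `x` at most the total weight and `1 ≤ y ≤ k`. -/
theorem equilibrium_loads_limited_values (n k : ℕ)
    (w : Fin n → ℕ) (hw : ∀ i, 0 < w i) (N : Fin n → Finset (Fin k))
    (σ : Fin n → Fin k → ℝ) (heq : ClientEq (fun i => (w i : ℝ)) N σ) :
    ∀ j : Fin k, ∃ x y : ℕ, x ≤ ∑ i, w i ∧ 1 ≤ y ∧ y ≤ k ∧
      load σ j = (x : ℝ) / (y : ℝ) := by
  classical
  obtain ⟨⟨hpos, hsupp, hsum⟩, heq'⟩ := heq
  intro j
  -- two facilities are related if some client puts positive weight on both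
  set r : Fin k → Fin k → Prop := fun a b => ∃ i, 0 < σ i a ∧ 0 < σ i b with hrdef
  have hmemN : ∀ (i : Fin n) (a : Fin k), 0 < σ i a → a ∈ N i := by
    intro i a ha
    by_contra h
    rw [hsupp i a h] at ha
    exact lt_irrefl 0 ha
  have hload : ∀ a b, r a b → load σ a = load σ b := by
    rintro a b ⟨i, ha, hb⟩
    have haN := hmemN i a ha
    have hbN := hmemN i b hb
    exact le_antisymm (heq' i a haN b hbN ha) (heq' i b hbN a haN hb)
  set S : Finset (Fin k) := univ.filter (fun b => Relation.ReflTransGen r j b) with hSdef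
  have hjS : j ∈ S := by
    simp only [hSdef, mem_filter, mem_univ, true_and]
    exact Relation.ReflTransGen.refl
  have hloadS : ∀ b ∈ S, load σ b = load σ j := by
    intro b hb
    simp only [hSdef, mem_filter, mem_univ, true_and] at hb
    induction hb with
    | refl => rfl
    | tail _ h ih => rw [← hload _ _ h]; exact ih
  have hclosed : ∀ (b : Fin k), b ∈ S → ∀ (i : Fin n) (c : Fin k),
      0 < σ i b → 0 < σ i c → c ∈ S := by
    intro b hb i c hib hic
    simp only [hSdef, mem_filter, mem_univ, true_and] at hb ⊢
    exact hb.tail ⟨i, hib, hic⟩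
  set T : Finset (Fin n) := univ.filter (fun i => ∃ b ∈ S, 0 < σ i b) with hTdef
  -- key computation
  have hinner : ∀ i ∈ T, ∑ b ∈ S, σ i b = (w i : ℝ) := by
    intro i hi
    simp only [hTdef, mem_filter, mem_univ, true_and] at hi
    obtain ⟨b0, hb0S, hb0⟩ := hi
    have h1 : ∑ b ∈ S, σ i b = ∑ b : Fin k, σ i b := by
      apply Finset.sum_subset (Finset.subset_univ S)
      intro c _ hcS
      by_contra h
      have hc : 0 < σ i c := lt_of_le_of_ne (hpos i c) (Ne.symm h)
      exact hcS (hclosed b0 hb0S i c hb0 hc)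
    have h2 : ∑ b : Fin k, σ i b = ∑ b ∈ N i, σ i b := by
      symm
      apply Finset.sum_subset (Finset.subset_univ (N i))
      intro c _ hcN
      exact hsupp i c hcN
    rw [h1, h2, hsum i ⟨b0, hmemN i b0 hb0⟩]
  have hkey : (S.card : ℝ) * load σ j = ((∑ i ∈ T, w i : ℕ) : ℝ) := by
    have e1 : ∑ b ∈ S, load σ b = (S.card : ℝ) * load σ j := by
      rw [Finset.sum_congr rfl hloadS, Finset.sum_const, nsmul_eq_mul]
    have e2 : ∑ b ∈ S, load σ b = ∑ i : Fin n, ∑ b ∈ S, σ i b := by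
      simp only [load]
      exact Finset.sum_comm
    have e3 : ∑ i : Fin n, ∑ b ∈ S, σ i b = ∑ i ∈ T, ∑ b ∈ S, σ i b := by
      symm
      apply Finset.sum_subset (Finset.subset_univ T)
      intro i _ hiT
      simp only [hTdef, mem_filter, mem_univ, true_and] at hiT
      push_neg at hiT
      exact Finset.sum_eq_zero fun b hb => le_antisymm (hiT b hb) (hpos i b)
    rw [← e1, e2, e3, Finset.sum_congr rfl hinner]
    push_cast
    rfl
  refine ⟨∑ i ∈ T, w i, S.card, ?_, ?_, ?_, ?_⟩
  · exact Finset.sum_le_sum_of_subset (Finset.subset_univ T)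
  · exact Finset.card_pos.mpr ⟨j, hjS⟩
  · calc S.card ≤ (univ : Finset (Fin k)).card := Finset.card_le_univ S
      _ = k := by simp
  · have hy : (S.card : ℝ) ≠ 0 :=
      Nat.cast_ne_zero.mpr (Finset.card_pos.mpr ⟨j, hjS⟩).ne'
    rw [eq_div_iff hy, mul_comm]
    exact hkey
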